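/- Define Z^r ∈ Z^{2^r × r} by applying the map 𝒜(y)_i = y_i − Σ_{k=i+1}^r y_k to each row of C^r (the change-count transform of the binary reflected Gray code). Then every entry of Z^r lies in {0,1}, and the rows of Z^r are pairwise distinct. -/

import Mathlib

/-- Binary reflected Gray code `K^r`, 0-indexed: `grayK r j i` is the entry in row
`j ∈ {0,…,2^r−1}` and column `i ∈ {0,…,r−1}`.  Base case `K^1 = (0;1)` and
`K^{r+1} = ((K^r, 0); (rev(K^r), 1))` where `rev` reverses the rows. -/
def grayK : ℕ → ℕ → ℕ → ℤ
  | 0, _, _ => 0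
  | (r+1), j, i =>
    if j < 2^r then (if i = r then 0 else grayK r j i)
    else (if i = r then 1 else grayK r (2^(r+1) - 1 - j) i)

/-- `C^r`, 0-indexed: `grayC r k i = Σ_{j=1}^{k} |K^r_{j,i} − K^r_{j−1,i}|`, the
number of value changes among the first `k+1` entries of column `i` of the
binary reflected Gray code. -/
def grayC (r k i : ℕ) : ℤ := ∑ j ∈ Finset.range k, |grayK r (j+1) i - grayK r j i|

/-- `Z^r`: the result of applying the linear map `𝒜(y)_i = y_i − Σ_{k>i} y_k`
to each row of `C^r` (0-indexed columns `i ∈ {0,…,r−1}`). -/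
def zigzagZ (r k i : ℕ) : ℤ := grayC r k i - ∑ j ∈ Finset.Ico (i+1) r, grayC r k j

/-- bit `i` of `n`, as an integer `0` or `1`. -/
def gbit (n i : ℕ) : ℤ := if n.testBit i then 1 else 0

lemma abs_gbit_sub (a b i : ℕ) : |gbit a i - gbit b i| = gbit (a ^^^ b) i := by
  cases h1 : a.testBit i <;> cases h2 : b.testBit i <;> simp [gbit, h1, h2]

lemma grayK_eq : ∀ r j i : ℕ, j < 2^r → grayK r j i = gbit (j ^^^ j/2) i := by
  intro r
  induction r with
  | zero =>
    intro j i hj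
    interval_cases j
    simp [grayK, gbit]
  | succ r ih =>
    intro j i hj
    have h2 : (2:ℕ)^(r+1) = 2^r * 2 := by ring
    have hgj : ∀ n i' : ℕ, (n ^^^ n/2).testBit i' = (n.testBit i' != n.testBit (i'+1)) := by
      intro n i'
      simp [Nat.testBit_xor, Nat.testBit_div_two]
    by_cases hj2 : j < 2^r
    · rw [grayK]
      simp only [if_pos hj2]
      have hlt : j ^^^ j/2 < 2^r :=
        Nat.xor_lt_two_pow hj2 (lt_of_le_of_lt (Nat.div_le_self j 2) hj2)
      by_cases hir : i = r
      · rw [if_pos hir, hir]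
        simp [gbit, Nat.testBit_lt_two_pow hlt]
      · rw [if_neg hir, ih j i hj2]
    · rw [grayK]
      simp only [if_neg hj2]
      push_neg at hj2
      set m := 2^(r+1) - 1 - j with hm
      have hmeq : m = 2^(r+1) - (j+1) := by omega
      have hmlt : m < 2^r := by omega
      have htbm : ∀ i' : ℕ, m.testBit i' = (decide (i' < r+1) && ! j.testBit i') := by
        intro i'
        rw [hmeq, Nat.testBit_two_pow_sub_succ hj i']
      have htbj : ∀ i' : ℕ, r + 1 ≤ i' → j.testBit i' = false := by
        intro i' hi'
        exact Nat.testBit_lt_two_pow (lt_of_lt_of_le hj (Nat.pow_le_pow_right (by norm_num) hi'))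
      by_cases hir : i = r
      · rw [if_pos hir]
        have hdr : j / 2^r = 1 := by
          apply Nat.div_eq_of_lt_le <;> omega
        have hjr : j.testBit r = true := by
          rw [Nat.testBit_eq_decide_div_mod_eq, hdr]
          norm_num
        have hgood : (j ^^^ j/2).testBit i = true := by
          rw [hir, hgj j r, hjr, htbj (r+1) le_rfl]
          rfl
        simp [gbit, hgood]
      · rw [if_neg hir, ih m i hmlt]
        unfold gbit
        congr 1
        rw [hgj m i, hgj j i, htbm i, htbm (i+1)]
        by_cases hlt : i < r
        · have e1 : i < r + 1 := Nat.lt_succ_of_lt hlt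
          have e2 : i + 1 < r + 1 := Nat.succ_lt_succ hlt
          simp [e1, e2]
        · have hge : r + 1 ≤ i := by omega
          have e1 : ¬ i < r + 1 := by omega
          simp [htbj i hge, htbj (i+1) (by omega), e1]
          omega

lemma gray_step (k i : ℕ) :
    gbit (((k+1) ^^^ (k+1)/2) ^^^ (k ^^^ k/2)) i
      = (((k+1)/2^i : ℕ) : ℤ) - ((k/2^i : ℕ) : ℤ)
        - ((((k+1)/2^(i+1) : ℕ) : ℤ) - ((k/2^(i+1) : ℕ) : ℤ)) := by
  have hA : (k+1)/2^i = k/2^i + if 2^i ∣ k+1 then 1 else 0 := Nat.succ_div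
  have hA2 : (k+1)/2^(i+1) = k/2^(i+1) + if 2^(i+1) ∣ k+1 then 1 else 0 :=
    Nat.succ_div
  have hdvd : 2^(i+1) ∣ k+1 → 2^i ∣ k+1 := fun h => dvd_trans (pow_dvd_pow 2 (Nat.le_succ i)) h
  have hdiv1 : (k+1)/2^(i+1) = ((k+1)/2^i)/2 := by
    rw [Nat.div_div_eq_div_mul, pow_succ]
  have hdiv2 : k/2^(i+1) = (k/2^i)/2 := by
    rw [Nat.div_div_eq_div_mul, pow_succ]
  obtain ⟨d1, hd1, hAe⟩ : ∃ d1, d1 ≤ 1 ∧ (k+1)/2^i = k/2^i + d1 := by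
    split_ifs at hA with h
    · exact ⟨1, le_rfl, hA⟩
    · exact ⟨0, Nat.zero_le 1, hA⟩
  obtain ⟨d2, hd2, hA2e⟩ : ∃ d2, d2 ≤ d1 ∧ (k+1)/2^(i+1) = k/2^(i+1) + d2 := by
    split_ifs at hA2 with h
    · refine ⟨1, ?_, hA2⟩
      rcases hdvd h with h'
      rw [if_pos h'] at hA
      omega
    · exact ⟨0, Nat.zero_le d1, hA2⟩
  rw [hdiv1, hdiv2] at hA2e ⊢
  unfold gbit
  rw [Nat.testBit_xor, Nat.testBit_xor, Nat.testBit_xor,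
    Nat.testBit_div_two, Nat.testBit_div_two,
    Nat.testBit_eq_decide_div_mod_eq, Nat.testBit_eq_decide_div_mod_eq, Nat.testBit_eq_decide_div_mod_eq,
    Nat.testBit_eq_decide_div_mod_eq, hdiv1, hdiv2]
  set A := (k+1)/2^i
  set B := k/2^i
  by_cases h1 : A % 2 = 1 <;> by_cases h2 : A/2 % 2 = 1 <;>
    by_cases h3 : B % 2 = 1 <;> by_cases h4 : B/2 % 2 = 1 <;>
    simp [h1, h2, h3, h4] <;> omega

lemma grayC_eq (r : ℕ) : ∀ k, k < 2^r → ∀ i, grayC r k i = ((k/2^i : ℕ) : ℤ) - ((k/2^(i+1) : ℕ) : ℤ) := by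
  intro k
  induction k with
  | zero => intro _ i; simp [grayC]
  | succ k ih =>
    intro hk i
    have hk' : k < 2^r := by omega
    rw [grayC, Finset.sum_range_succ, ← grayC]
    rw [grayK_eq r (k+1) i hk, grayK_eq r k i hk', abs_gbit_sub, gray_step,
      ih hk' i]
    ring

lemma tele (f : ℕ → ℤ) (m n : ℕ) (h : m ≤ n) :
    ∑ j ∈ Finset.Ico m n, (f j - f (j+1)) = f m - f n := by
  induction n, h using Nat.le_induction with
  | base => simp
  | succ n hmn ih => rw [Finset.sum_Ico_succ_top hmn, ih]; ring

lemma zigzagZ_eq (r k i : ℕ) (hk : k < 2^r) (hi : i < r) :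
    zigzagZ r k i = ((k / 2^i % 2 : ℕ) : ℤ) := by
  unfold zigzagZ
  rw [grayC_eq r k hk i]
  rw [Finset.sum_congr rfl (fun j _ => grayC_eq r k hk j)]
  rw [tele (fun j => ((k/2^j : ℕ) : ℤ)) (i+1) r hi]
  have hr : k / 2^r = 0 := Nat.div_eq_of_lt hk
  have hdiv : k/2^(i+1) = (k/2^i)/2 := by rw [Nat.div_div_eq_div_mul, pow_succ]
  rw [hr, hdiv]
  push_cast
  omega

/-- Every entry of `Z^r` lies in `{0,1}`, and the rows of `Z^r` are pairwise
distinct. -/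
theorem zigzagZ_binary_and_rows_distinct (r : ℕ) (hr : 1 ≤ r) :
    (∀ k < 2^r, ∀ i < r, zigzagZ r k i = 0 ∨ zigzagZ r k i = 1) ∧
    (∀ k < 2^r, ∀ k' < 2^r, k ≠ k' → ∃ i < r, zigzagZ r k i ≠ zigzagZ r k' i) := by
  constructor
  · intro k hk i hi
    rw [zigzagZ_eq r k i hk hi]
    have := Nat.mod_two_eq_zero_or_one (k / 2^i)
    rcases this with h | h <;> simp [h]
  · intro k hk k' hk' hne
    by_contra h
    push_neg at h
    apply hne
    apply Nat.eq_of_testBit_eq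
    intro i
    by_cases hi : i < r
    · have := h i hi
      rw [zigzagZ_eq r k i hk hi, zigzagZ_eq r k' i hk' hi] at this
      have hmod : k / 2^i % 2 = k' / 2^i % 2 := by exact_mod_cast this
      rw [Nat.testBit_eq_decide_div_mod_eq, Nat.testBit_eq_decide_div_mod_eq, hmod]
    · have hge : r ≤ i := by omega
      have h2 : (2:ℕ)^r ≤ 2^i := Nat.pow_le_pow_right (by norm_num) hge
      rw [Nat.testBit_lt_two_pow (by omega), Nat.testBit_lt_two_pow (by omega)]
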